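/- Let all parameters b, β_{vh}, β_{hv}, m, μ_v, τ_v, τ_h, τ1, τ2 be positive and define R0 = b²β_{vh}β_{hv} m τ1 / (μ_v(μ_v τ_v + 1)). Then the triple E* = μ_v τ_h (R0 − 1)/(μ_v R0 (τ1 + τ2 + τ_h) + b β_{hv} τ1), E_v* = μ_v τ_v (R0 − 1)/(R0(1 + μ_v τ_v) + b β_{vh} m (τ1 + τ2 + τ_h)), I_v* = (R0 − 1)/(R0(1 + μ_v τ_v) + b β_{vh} m (τ1 + τ2 + τ_h)) is a stationary solution of the delay system E' = bβ_{vh} m I_v (1 − E − (1/τ_h)∫_{t−τ1−τ2}^{t} E) − E/τ_h, E_v' = bβ_{hv}(1/τ_h)∫_{t−τ1}^{t} E · (1 − E_v − I_v) − (1/τ_v + μ_v)E_v, I_v' = E_v/τ_v − μ_v I_v; i.e., with constant E ≡ E*, E_v ≡ E_v*, I_v ≡ I_v*, the right-hand sides vanish. -/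

import Mathlib

set_option maxHeartbeats 4000000 in
theorem stmt10
    (b βvh βhv m μv τv τh τ1 τ2 R0 : ℝ)
    (hb : 0 < b) (hβvh : 0 < βvh) (hβhv : 0 < βhv) (hm : 0 < m)
    (hμv : 0 < μv) (hτv : 0 < τv) (hτh : 0 < τh) (hτ1 : 0 < τ1) (hτ2 : 0 < τ2)
    (hR0 : R0 = b ^ 2 * βvh * βhv * m * τ1 / (μv * (μv * τv + 1)))
    (Estar Evstar Ivstar : ℝ)
    (hE : Estar = μv * τh * (R0 - 1) / (μv * R0 * (τ1 + τ2 + τh) + b * βhv * τ1))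
    (hEv : Evstar = μv * τv * (R0 - 1) / (R0 * (1 + μv * τv) + b * βvh * m * (τ1 + τ2 + τh)))
    (hIv : Ivstar = (R0 - 1) / (R0 * (1 + μv * τv) + b * βvh * m * (τ1 + τ2 + τh))) :
    ∀ t : ℝ,
      (b * βvh * m * Ivstar *
        (1 - Estar - ∫ s in (t - τ1 - τ2)..t, Estar / τh) - Estar / τh = 0) ∧
      (b * βhv * (∫ s in (t - τ1)..t, Estar / τh) * (1 - Evstar - Ivstar)
        - (1 / τv + μv) * Evstar = 0) ∧
      (Evstar / τv - μv * Ivstar = 0) := by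
  intro t
  have hR0pos : 0 < R0 := by rw [hR0]; positivity
  have hD1 : μv * R0 * (τ1 + τ2 + τh) + b * βhv * τ1 ≠ 0 := by positivity
  have hD2 : R0 * (1 + μv * τv) + b * βvh * m * (τ1 + τ2 + τh) ≠ 0 := by positivity
  rw [intervalIntegral.integral_const, intervalIntegral.integral_const]
  subst hE hEv hIv hR0
  refine ⟨?_, ?_, ?_⟩
  · have h1 : b * βvh * m * (τ1 + τ2 + τh) + (μv * τv + 1) ≠ 0 := by positivity
    have h2 : b * βhv * τ1 * (1 + μv * τv) + μv * (μv * τv + 1) * (τ1 + τ2 + τh) ≠ 0 := by positivity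
    field_simp
    ring_nf
    field_simp
    ring
  · have h1 : b * βvh * m * (τ1 + τ2 + τh) + (μv * τv + 1) ≠ 0 := by positivity
    have h2 : b * βhv * τ1 * (1 + μv * τv) + μv * (μv * τv + 1) * (τ1 + τ2 + τh) ≠ 0 := by positivity
    field_simp
    ring_nf
    field_simp
    ring
  · field_simp
    ring
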